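/- Let G be a group containing a normal, non-abelian maximal subgroup M. Let x ∈ M \ Z(M) and y ∈ G \ M, and suppose that R is a maximal subgroup of G containing y such that the centraliser of y in R ∩ M is a proper subgroup of R ∩ M and R ∩ M ≠ Z(M). Then the distance d(x,y) in the non-commuting, non-generating graph nc(G) is at most 3. -/

import Mathlib

open Subgroup

namespace NC

variable {G : Type*} [Group G]

/-- The centre of a subgroup `H`, realised as a subgroup of the ambient group `G`. -/
def centerOf (H : Subgroup G) : Subgroup G := H ⊓ Subgroup.centralizer (H : Set G)

/-- `H` is a maximal subgroup of `K` (both subgroups of the ambient group `G`). -/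
def IsMaximalIn (H K : Subgroup G) : Prop :=
  H < K ∧ ∀ T : Subgroup G, H < T → T ≤ K → T = K

/-- The non-commuting, non-generating graph of `G`: vertices `x, y` are adjacent
iff they do not commute and do not generate `G`.  (Central elements are isolated
vertices here; the paper simply removes them from the vertex set.) -/
def ncGraph (G : Type*) [Group G] : SimpleGraph G where
  Adj x y := x * y ≠ y * x ∧ Subgroup.closure {x, y} ≠ ⊤
  symm := by
    constructor
    intro x y h
    exact ⟨fun e => h.1 e.symm, by rw [Set.pair_comm]; exact h.2⟩
  loopless := by
    constructor
    intro x h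
    exact h.1 rfl

/-- The conjugate `g H g⁻¹` of a subgroup `H` by an element `g`. -/
def conjSub (g : G) (H : Subgroup G) : Subgroup G := H.map (MulAut.conj g).toMonoidHom

/-- "The quotient of `G` by the subgroup `H` is cyclic": every coset of `H` is a
power of a fixed coset.  For `H` normal this says exactly that `G/H` is cyclic. -/
def QuotCyclic (H : Subgroup G) : Prop := ∃ g : G, ∀ x : G, ∃ n : ℤ, x⁻¹ * g ^ n ∈ H

/-- `P` is a Sylow `p`-subgroup of `G`. -/
def IsSylowIn (p : ℕ) (P : Subgroup G) : Prop :=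
  IsPGroup p P ∧ ∀ R : Subgroup G, IsPGroup p R → P ≤ R → R = P

/-- The Frattini subgroup of a subgroup `P` (the intersection of the maximal
subgroups of `P`), realised as a subgroup of the ambient group. -/
def phiIn (P : Subgroup G) : Subgroup G := P ⊓ sInf {W : Subgroup G | IsMaximalIn W P}

/-- `G` has exactly two conjugacy classes of maximal subgroups. -/
def TwoMaxClasses (G : Type*) [Group G] : Prop :=
  ∃ K L : Subgroup G, IsCoatom K ∧ IsCoatom L ∧ (∀ g : G, conjSub g K ≠ L) ∧
    ∀ T : Subgroup G, IsCoatom T → (∃ g : G, T = conjSub g K) ∨ (∃ g : G, T = conjSub g L)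

/-- The induced subgraph of the non-commuting, non-generating graph on the
actual vertex set `G \ Z(G)`. -/
def ncSubgraph (G : Type*) [Group G] := (ncGraph G).induce {x : G | x ∉ Subgroup.center G}

lemma mem_centerOf {H : Subgroup G} {g : G} :
    g ∈ centerOf H ↔ g ∈ H ∧ ∀ m ∈ H, m * g = g * m := by
  rw [centerOf, Subgroup.mem_inf, Subgroup.mem_centralizer_iff]
  rfl

lemma centerOf_normal {M : Subgroup G} (hMn : M.Normal) : (centerOf M).Normal := by
  constructor
  intro z hz g
  obtain ⟨hzM, hzc⟩ := mem_centerOf.mp hz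
  rw [mem_centerOf]
  refine ⟨hMn.conj_mem z hzM g, ?_⟩
  intro m hm
  have hm' : g⁻¹ * m * g ∈ M := by
    have := hMn.conj_mem m hm g⁻¹
    simpa [mul_assoc] using this
  have h2 := hzc _ hm'
  calc m * (g * z * g⁻¹) = g * ((g⁻¹ * m * g) * z) * g⁻¹ := by group
    _ = g * (z * (g⁻¹ * m * g)) * g⁻¹ := by rw [h2]
    _ = (g * z * g⁻¹) * m := by group

lemma not_inf_le_centerOf {M R : Subgroup G} (hMn : M.Normal)
    (hMna : ∃ a ∈ M, ∃ b ∈ M, a * b ≠ b * a)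
    (hR : IsCoatom R) (hRM : R ⊓ M ≠ centerOf M) :
    ¬ (R ⊓ M ≤ centerOf M) := by
  intro h
  have hZM : centerOf M ≤ M := inf_le_left
  haveI : (centerOf M).Normal := centerOf_normal hMn
  have hZR : ¬ centerOf M ≤ R := by
    intro hZR
    exact hRM (le_antisymm h (le_inf hZR hZM))
  have htop : R ⊔ centerOf M = ⊤ := hR.2 _ (left_lt_sup.mpr hZR)
  obtain ⟨a, haM, b, hbM, hab⟩ := hMna
  have haZ : a ∈ centerOf M := by
    have hmem : a ∈ ((R ⊔ centerOf M : Subgroup G) : Set G) := by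
      rw [htop]; trivial
    rw [Subgroup.mul_normal] at hmem
    obtain ⟨r, hr, z, hz, rfl⟩ := hmem
    have hrM : r ∈ M := by
      have he : r = (r * z) * z⁻¹ := by group
      rw [he]
      exact M.mul_mem haM (M.inv_mem (hZM hz))
    have : r ∈ centerOf M := h ⟨hr, hrM⟩
    exact (centerOf M).mul_mem this hz
  exact hab ((mem_centerOf.mp haZ).2 b hbM).symm

lemma exists_z {M : Subgroup G} {x w : G}
    (hxc : ∃ a ∈ M, a * x ≠ x * a) (hwc : ∃ a ∈ M, a * w ≠ w * a) :
    ∃ z ∈ M, z * x ≠ x * z ∧ z * w ≠ w * z := by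
  obtain ⟨b, hbM, hbx⟩ := hxc
  obtain ⟨a, haM, haw⟩ := hwc
  by_cases hax : a * x = x * a
  · by_cases hbw : b * w = w * b
    · refine ⟨a * b, M.mul_mem haM hbM, ?_, ?_⟩
      · intro h
        apply hbx
        have h1 : a * (b * x) = a * (x * b) := by
          calc a * (b * x) = a * b * x := by rw [mul_assoc]
            _ = x * (a * b) := h
            _ = x * a * b := by rw [mul_assoc]
            _ = a * x * b := by rw [hax]
            _ = a * (x * b) := by rw [mul_assoc]
        exact mul_left_cancel h1
      · intro h
        apply haw
        have h1 : (a * w) * b = (w * a) * b := by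
          calc a * w * b = a * (w * b) := by rw [mul_assoc]
            _ = a * (b * w) := by rw [hbw]
            _ = a * b * w := by rw [mul_assoc]
            _ = w * (a * b) := h
            _ = w * a * b := by rw [mul_assoc]
        exact mul_right_cancel h1
    · exact ⟨b, hbM, hbx, hbw⟩
  · exact ⟨a, haM, hax, haw⟩

lemma closure_pair_ne_top {K : Subgroup G} (hK : K ≠ ⊤) {a b : G}
    (ha : a ∈ K) (hb : b ∈ K) : Subgroup.closure {a, b} ≠ ⊤ := by
  intro h
  apply hK
  have hle : Subgroup.closure {a, b} ≤ K := by
    rw [Subgroup.closure_le]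
    rintro g (rfl | rfl) <;> assumption
  rw [h] at hle
  exact top_le_iff.mp hle

lemma noncentral_witness {M : Subgroup G} {w : G} (hw : w ∈ M) (hwZ : w ∉ centerOf M) :
    ∃ a ∈ M, a * w ≠ w * a := by
  by_contra h
  push_neg at h
  exact hwZ (mem_centerOf.mpr ⟨hw, h⟩)

/-- Lemma 4.7 / `lem:rmaxdist`. -/
theorem statement_15 {M : Subgroup G} (hM : IsCoatom M) (hMn : M.Normal)
    (hMna : ∃ a ∈ M, ∃ b ∈ M, a * b ≠ b * a)
    {x y : G} (hx : x ∈ M) (hxZ : x ∉ centerOf M) (hy : y ∉ M)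
    {R : Subgroup G} (hR : IsCoatom R) (hyR : y ∈ R)
    (hcent : (R ⊓ M) ⊓ Subgroup.centralizer {y} < R ⊓ M)
    (hRM : R ⊓ M ≠ centerOf M) :
    (ncGraph G).Reachable x y ∧ (ncGraph G).dist x y ≤ 3 := by
  -- find w ∈ R ⊓ M, noncentral in M, not commuting with y
  obtain ⟨u, huRM, huZ⟩ := SetLike.not_le_iff_exists.mp
    (not_inf_le_centerOf hMn hMna hR hRM)
  obtain ⟨v, hvRM, hv⟩ := SetLike.exists_of_lt hcent
  have hvy : ¬ y * v = v * y := by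
    intro hc
    apply hv
    refine Subgroup.mem_inf.mpr ⟨hvRM, ?_⟩
    rw [Subgroup.mem_centralizer_iff]
    rintro h (rfl : h = y)
    exact hc
  have hkey : ∃ w, w ∈ R ⊓ M ∧ w ∉ centerOf M ∧ y * w ≠ w * y := by
    by_cases hvZ : v ∈ centerOf M
    · by_cases huy : y * u = u * y
      · refine ⟨u * v, (R ⊓ M).mul_mem huRM hvRM, ?_, ?_⟩
        · intro hc
          apply huZ
          have : u = (u * v) * v⁻¹ := by group
          rw [this]
          exact (centerOf M).mul_mem hc ((centerOf M).inv_mem hvZ)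
        · intro hc
          apply hvy
          have h1 : u * (y * v) = u * (v * y) := by
            calc u * (y * v) = u * y * v := by rw [mul_assoc]
              _ = y * u * v := by rw [huy]
              _ = y * (u * v) := by rw [mul_assoc]
              _ = u * v * y := hc
              _ = u * (v * y) := by rw [mul_assoc]
          exact mul_left_cancel h1
      · exact ⟨u, huRM, huZ, huy⟩
    · exact ⟨v, hvRM, hvZ, hvy⟩
  obtain ⟨w, hwRM, hwZ, hwy⟩ := hkey
  obtain ⟨hwR, hwM⟩ := Subgroup.mem_inf.mp hwRM
  -- find z ∈ M not commuting with x nor with w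
  obtain ⟨z, hzM, hzx, hzw⟩ := exists_z (M := M)
    (noncentral_witness hx hxZ) (noncentral_witness hwM hwZ)
  -- edges
  have e1 : (ncGraph G).Adj x z :=
    ⟨fun h => hzx h.symm, closure_pair_ne_top hM.1 hx hzM⟩
  have e2 : (ncGraph G).Adj z w :=
    ⟨hzw, closure_pair_ne_top hM.1 hzM hwM⟩
  have e3 : (ncGraph G).Adj w y :=
    ⟨fun h => hwy h.symm, closure_pair_ne_top hR.1 hwR hyR⟩
  let p : (ncGraph G).Walk x y :=
    SimpleGraph.Walk.cons e1 (SimpleGraph.Walk.cons e2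
      (SimpleGraph.Walk.cons e3 SimpleGraph.Walk.nil))
  refine ⟨⟨p⟩, ?_⟩
  have := SimpleGraph.dist_le p
  simpa [p] using this

end NC
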